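/- The function v ↦ θ(v,τ)/v extends to a holomorphic function at v = 0 with value θ'(0,τ) = 2π q^{1/8} ∏_{j=1}^∞ (1−q^j)³, and in particular θ'(0,τ) ≠ 0. -/

import Mathlib

noncomputable section

/-- `πC` is the real number `π` viewed as a complex number. -/
def πC : ℂ := Real.pi

/-- The nome `q = e^{2πiτ}`. -/
def nome (τ : ℂ) : ℂ := Complex.exp (2 * πC * Complex.I * τ)

open Complex Filter Metric Finset Topology

/-- The factors of the triple product. -/
def fjac (τ : ℂ) (j : ℕ) (v : ℂ) : ℂ :=
  (1 - nome τ ^ (j + 1)) *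
  (1 - Complex.exp (2 * πC * Complex.I * v) * nome τ ^ (j + 1)) *
  (1 - Complex.exp (-(2 * πC * Complex.I * v)) * nome τ ^ (j + 1))

lemma fjac_differentiable (τ : ℂ) (j : ℕ) : Differentiable ℂ (fjac τ j) := by
  have h1 : Differentiable ℂ (fun v : ℂ => Complex.exp (2 * πC * Complex.I * v)) :=
    Complex.differentiable_exp.comp (differentiable_id.const_mul _)
  have h2 : Differentiable ℂ (fun v : ℂ => Complex.exp (-(2 * πC * Complex.I * v))) :=
    Complex.differentiable_exp.comp ((differentiable_id.const_mul _).neg)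
  exact (((differentiable_const _).sub (h1.mul_const _)).const_mul _).mul
    ((differentiable_const _).sub (h2.mul_const _))

lemma fjac_zero (τ : ℂ) (j : ℕ) : fjac τ j 0 = (1 - nome τ ^ (j + 1)) ^ 3 := by
  simp only [fjac, mul_zero, neg_zero, Complex.exp_zero, one_mul]
  ring

lemma one_sub_ne_zero {z : ℂ} (h : ‖z‖ < 1) : 1 - z ≠ 0 := by
  intro h0
  have : z = 1 := by
    have := sub_eq_zero.mp h0
    exact this.symm
  rw [this] at h
  simp at h

lemma sinc_analytic : AnalyticAt ℂ (fun v : ℂ => if v = 0 then πC else Complex.sin (πC * v) / v) 0 := by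
  have hg : AnalyticAt ℂ (fun v : ℂ => Complex.sin (πC * v)) 0 := by
    have : Differentiable ℂ (fun v : ℂ => Complex.sin (πC * v)) :=
      Complex.differentiable_sin.comp (differentiable_id.const_mul _)
    exact (this.differentiableOn (s := Set.univ)).analyticAt (by simp)
  obtain ⟨p, hp⟩ := hg
  have hd : AnalyticAt ℂ (dslope (fun v : ℂ => Complex.sin (πC * v)) 0) 0 :=
    hp.has_fpower_series_dslope_fslope.analyticAt
  apply hd.congr
  apply Filter.Eventually.of_forall
  intro v
  by_cases hv : v = 0
  · subst hv
    simp only [if_pos]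
    rw [dslope_same]
    have : HasDerivAt (fun v : ℂ => Complex.sin (πC * v)) (Complex.cos (πC * 0) * (πC * 1)) 0 :=
      (Complex.hasDerivAt_sin (πC * 0)).comp 0 ((hasDerivAt_id 0).const_mul πC)
    simp only [mul_zero, Complex.cos_zero, mul_one, one_mul] at this
    simp [this.deriv]
  · rw [dslope_of_ne _ hv]
    simp only [if_neg hv]
    rw [slope_def_field]
    simp [hv]

set_option maxHeartbeats 2000000 in
theorem jacobiθ_key (τ : ℂ) (hτ : 0 < τ.im) :
    ∃ U : Set ℂ, IsOpen U ∧ (0 : ℂ) ∈ U ∧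
      (∀ v ∈ U, ∀ j, fjac τ j v ≠ 0) ∧
      ∃ N : ℕ, ∃ T : ℂ → ℂ,
        DifferentiableOn ℂ T U ∧
        (∀ v ∈ U, (∏' j : ℕ, fjac τ j v) =
          (∏ j ∈ Finset.range N, fjac τ j v) * Complex.exp (T v)) := by
  set q := nome τ with hq
  set r := ‖q‖ with hrdef
  have hr0 : 0 < r := by
    rw [hrdef, hq, nome, Complex.norm_exp]
    exact Real.exp_pos _
  have hr1 : r < 1 := by
    rw [hrdef, hq, nome, Complex.norm_exp]
    rw [Real.exp_lt_one_iff]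
    have : (2 * πC * Complex.I * τ).re = -(2 * Real.pi * τ.im) := by
      simp [πC, Complex.mul_re, Complex.mul_im]
      try ring
    rw [this]
    have := Real.pi_pos
    nlinarith
  -- choose N with r^(N+1) < 1/20
  obtain ⟨N, hN⟩ := exists_pow_lt_of_lt_one (by norm_num : (0:ℝ) < 1/20) hr1
  have hNr : r ^ (N + 1) < 1 / 20 := by
    calc r ^ (N + 1) ≤ r ^ N := pow_le_pow_of_le_one hr0.le hr1.le (by omega)
    _ < 1 / 20 := hN
  -- the neighborhood
  have h1r : (1:ℝ) < r⁻¹ := (one_lt_inv₀ hr0).mpr hr1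
  set c := min 2 r⁻¹ with hcdef
  have hc1 : 1 < c := lt_min one_lt_two h1r
  have hc2 : c ≤ 2 := min_le_left _ _
  have hcr : c ≤ r⁻¹ := min_le_right _ _
  set ep : ℂ → ℂ := fun v => Complex.exp (2 * πC * Complex.I * v) with hep
  set em : ℂ → ℂ := fun v => Complex.exp (-(2 * πC * Complex.I * v)) with hem
  have hcep : Continuous ep := Complex.continuous_exp.comp (continuous_const.mul continuous_id)
  have hcem : Continuous em := Complex.continuous_exp.comp ((continuous_const.mul continuous_id).neg)
  set U : Set ℂ := ep ⁻¹' Metric.ball 0 c ∩ em ⁻¹' Metric.ball 0 c with hUdef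
  have hUopen : IsOpen U :=
    (Metric.isOpen_ball.preimage hcep).inter (Metric.isOpen_ball.preimage hcem)
  have hU0 : (0:ℂ) ∈ U := by
    constructor <;>
    · simp only [Set.mem_preimage, Metric.mem_ball, hep, hem, mul_zero, neg_zero,
        Complex.exp_zero, dist_zero_right, norm_one]
      exact hc1
  have hbounds : ∀ v ∈ U, ‖ep v‖ < c ∧ ‖em v‖ < c := by
    intro v hv
    obtain ⟨h1, h2⟩ := hv
    simp only [Set.mem_preimage, Metric.mem_ball, dist_zero_right] at h1 h2
    exact ⟨h1, h2⟩
  have hqpow : ∀ m : ℕ, ‖q ^ m‖ = r ^ m := fun m => norm_pow q m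
  -- nonvanishing
  have hne : ∀ v ∈ U, ∀ j, fjac τ j v ≠ 0 := by
    intro v hv j
    obtain ⟨hbp, hbm⟩ := hbounds v hv
    have hrj1 : r ^ (j+1) ≤ r := by
      calc r ^ (j+1) ≤ r ^ 1 := pow_le_pow_of_le_one hr0.le hr1.le (by omega)
      _ = r := pow_one r
    have key : ∀ e : ℂ, ‖e‖ < c → ‖e * q ^ (j+1)‖ < 1 := by
      intro e he
      rw [norm_mul, hqpow]
      have h1 : ‖e‖ * r ^ (j+1) < r⁻¹ * r ^ (j+1) :=
        mul_lt_mul_of_pos_right (lt_of_lt_of_le he hcr) (pow_pos hr0 _)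
      have h2 : r⁻¹ * r ^ (j+1) = r ^ j := by
        rw [pow_succ]
        field_simp
      rw [h2] at h1
      exact lt_of_lt_of_le h1 (pow_le_one₀ hr0.le hr1.le)
    have h1 : (1 : ℂ) - q ^ (j+1) ≠ 0 :=
      one_sub_ne_zero (by rw [hqpow]; exact lt_of_le_of_lt hrj1 hr1)
    have h2 : (1 : ℂ) - ep v * q ^ (j+1) ≠ 0 := one_sub_ne_zero (key _ hbp)
    have h3 : (1 : ℂ) - em v * q ^ (j+1) ≠ 0 := one_sub_ne_zero (key _ hbm)
    exact mul_ne_zero (mul_ne_zero h1 h2) h3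
  -- tail bound
  have htail : ∀ v ∈ U, ∀ j : ℕ, ‖fjac τ (j + N) v - 1‖ ≤ 8 * r ^ (j + N + 1) := by
    intro v hv j
    obtain ⟨hbp, hbm⟩ := hbounds v hv
    set m := j + N + 1 with hm
    set s := r ^ m with hs
    have hs0 : 0 ≤ s := pow_nonneg hr0.le _
    have hs20 : s ≤ 1/20 := by
      rw [hs]
      calc r ^ m ≤ r ^ (N+1) := pow_le_pow_of_le_one hr0.le hr1.le (by omega)
      _ ≤ 1/20 := hNr.le
    set a := q ^ m with ha
    set b := ep v * q ^ m with hb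
    set c' := em v * q ^ m with hc'
    have hna : ‖a‖ ≤ s := by rw [ha, hqpow]
    have hnb : ‖b‖ ≤ 2 * s := by
      rw [hb, norm_mul, hqpow]
      have := (hbounds v hv).1
      nlinarith [norm_nonneg (ep v), lt_of_lt_of_le this hc2]
    have hnc : ‖c'‖ ≤ 2 * s := by
      rw [hc', norm_mul, hqpow]
      have := (hbounds v hv).2
      nlinarith [norm_nonneg (em v), lt_of_lt_of_le this hc2]
    have hexp : fjac τ (j + N) v - 1 = -a - b - c' + a*b + a*c' + b*c' - a*b*c' := by
      have : j + N + 1 = m := rfl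
      simp only [fjac, ← hq, this, ← ha, ← hb, ← hc', ← hep, ← hem]
      ring
    have hab : ‖a*b‖ ≤ s*(2*s) := by
      rw [norm_mul]; exact mul_le_mul hna hnb (norm_nonneg _) hs0
    have hac : ‖a*c'‖ ≤ s*(2*s) := by
      rw [norm_mul]; exact mul_le_mul hna hnc (norm_nonneg _) hs0
    have hbc : ‖b*c'‖ ≤ (2*s)*(2*s) := by
      rw [norm_mul]; exact mul_le_mul hnb hnc (norm_nonneg _) (by linarith)
    have habc : ‖a*b*c'‖ ≤ s*(2*s)*(2*s) := by
      rw [norm_mul]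
      exact mul_le_mul hab hnc (norm_nonneg _) (by nlinarith)
    rw [hexp]
    calc ‖-a - b - c' + a*b + a*c' + b*c' - a*b*c'‖
        ≤ ‖-a - b - c' + a*b + a*c' + b*c'‖ + ‖a*b*c'‖ := norm_sub_le _ _
      _ ≤ ‖-a - b - c' + a*b + a*c'‖ + ‖b*c'‖ + ‖a*b*c'‖ := by
          gcongr; exact norm_add_le _ _
      _ ≤ ‖-a - b - c' + a*b‖ + ‖a*c'‖ + ‖b*c'‖ + ‖a*b*c'‖ := by
          gcongr; exact norm_add_le _ _
      _ ≤ ‖-a - b - c'‖ + ‖a*b‖ + ‖a*c'‖ + ‖b*c'‖ + ‖a*b*c'‖ := by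
          gcongr; exact norm_add_le _ _
      _ ≤ ‖-a - b‖ + ‖c'‖ + ‖a*b‖ + ‖a*c'‖ + ‖b*c'‖ + ‖a*b*c'‖ := by
          gcongr; exact norm_sub_le _ _
      _ ≤ ‖a‖ + ‖b‖ + ‖c'‖ + ‖a*b‖ + ‖a*c'‖ + ‖b*c'‖ + ‖a*b*c'‖ := by
          gcongr
          calc ‖-a - b‖ ≤ ‖-a‖ + ‖b‖ := norm_sub_le _ _
          _ = ‖a‖ + ‖b‖ := by rw [norm_neg]
      _ ≤ 8 * s := by nlinarith [norm_nonneg a, norm_nonneg b, norm_nonneg c']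
  have htail_half : ∀ v ∈ U, ∀ j : ℕ, ‖fjac τ (j + N) v - 1‖ ≤ 1/2 := by
    intro v hv j
    refine le_trans (htail v hv j) ?_
    have : r ^ (j + N + 1) ≤ 1/20 := by
      calc r ^ (j + N + 1) ≤ r ^ (N+1) := pow_le_pow_of_le_one hr0.le hr1.le (by omega)
      _ ≤ 1/20 := hNr.le
    linarith
  have hlog : ∀ v ∈ U, ∀ j : ℕ, ‖Complex.log (fjac τ (j + N) v)‖ ≤ 12 * r ^ (N+1) * r ^ j := by
    intro v hv j
    have h2 := htail_half v hv j
    have h := Complex.norm_log_one_add_half_le_self h2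
    have he : (1 : ℂ) + (fjac τ (j + N) v - 1) = fjac τ (j + N) v := by ring
    rw [he] at h
    have hpow : r ^ (j + N + 1) = r ^ (N+1) * r ^ j := by
      rw [← pow_add]
      congr 1
      omega
    calc ‖Complex.log (fjac τ (j + N) v)‖ ≤ 3/2 * ‖fjac τ (j + N) v - 1‖ := h
    _ ≤ 3/2 * (8 * r ^ (j + N + 1)) := by
        have := htail v hv j
        nlinarith [norm_nonneg (fjac τ (j + N) v - 1)]
    _ = 12 * r ^ (N+1) * r ^ j := by rw [hpow]; ring
  -- summable bound
  have hu : Summable (fun j : ℕ => 12 * r ^ (N+1) * r ^ j) :=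
    (summable_geometric_of_lt_one hr0.le hr1).mul_left _
  -- T and its differentiability
  set T : ℂ → ℂ := fun v => ∑' j : ℕ, Complex.log (fjac τ (j + N) v) with hT
  have hslit : ∀ v ∈ U, ∀ j : ℕ, fjac τ (j + N) v ∈ Complex.slitPlane := by
    intro v hv j
    rw [Complex.mem_slitPlane_iff]
    left
    have h2 := htail_half v hv j
    have hre : |(fjac τ (j + N) v - 1).re| ≤ ‖fjac τ (j + N) v - 1‖ := by
      exact Complex.abs_re_le_norm _
    have : (fjac τ (j + N) v - 1).re = (fjac τ (j + N) v).re - 1 := by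
      simp [Complex.sub_re]
    rw [this] at hre
    have := abs_le.mp hre
    linarith [this.1]
  have hTdiff : DifferentiableOn ℂ T U := by
    apply differentiableOn_tsum_of_summable_norm hu
      (fun j => ?_) hUopen (fun j w hw => hlog w hw j)
    intro w hw
    exact (((fjac_differentiable τ (j + N)).differentiableAt).clog
      (hslit w hw j)).differentiableWithinAt
  refine ⟨U, hUopen, hU0, hne, N, T, hTdiff, ?_⟩
  -- the product identity
  intro v hv
  have hsummable : Summable (fun j : ℕ => Complex.log (fjac τ (j + N) v)) :=
    Summable.of_norm_bounded hu (fun j => hlog v hv j)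
  have hprod : HasProd (fun j : ℕ => fjac τ (j + N) v) (Complex.exp (T v)) := by
    have h1 := hsummable.hasSum.cexp
    have h2 : Complex.exp ∘ (fun j : ℕ => Complex.log (fjac τ (j + N) v))
        = fun j : ℕ => fjac τ (j + N) v := by
      funext j
      exact Complex.exp_log (hne v hv (j + N))
    rwa [h2] at h1
  have hhead := (Finset.range N).hasProd (fun j => fjac τ j v)
  have hcompl : HasProd ((fun j => fjac τ j v) ∘ (↑) :
      ((↑(Finset.range N) : Set ℕ)ᶜ : Set ℕ) → ℂ) (Complex.exp (T v)) :=
    ((notMemRangeEquiv N).symm.hasProd_iff).mp hprod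
  exact (hhead.mul_compl hcompl).tprod_eq

/-- The Jacobi theta function
`θ(v,τ) = 2 q^{1/8} sin(πv) ∏_{j=1}^∞ (1−q^j)(1−e^{2πiv}q^j)(1−e^{−2πiv}q^j)`,
where `q^{1/8} = e^{πiτ/4}`. -/
def jacobiθ (τ v : ℂ) : ℂ :=
  2 * Complex.exp (πC * Complex.I * τ / 4) * Complex.sin (πC * v) *
    ∏' j : ℕ,
      ((1 - nome τ ^ (j + 1)) *
       (1 - Complex.exp (2 * πC * Complex.I * v) * nome τ ^ (j + 1)) *
       (1 - Complex.exp (-(2 * πC * Complex.I * v)) * nome τ ^ (j + 1)))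

set_option maxHeartbeats 1000000 in
/-- `v ↦ θ(v,τ)/v` extends holomorphically at `v = 0` with value
`θ'(0,τ) = 2π q^{1/8} ∏_{j≥1}(1−q^j)³ ≠ 0`; in particular `θ'(0,τ)` is the derivative
of `θ(·,τ)` at `0`. -/
theorem jacobiθ_div_v_analyticAt_zero (τ : ℂ) (hτ : 0 < τ.im) :
    AnalyticAt ℂ
      (fun v : ℂ => if v = 0 then
          2 * πC * Complex.exp (πC * Complex.I * τ / 4) * ∏' j : ℕ, (1 - nome τ ^ (j + 1)) ^ 3
        else jacobiθ τ v / v) 0 ∧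
    HasDerivAt (fun v => jacobiθ τ v)
      (2 * πC * Complex.exp (πC * Complex.I * τ / 4) * ∏' j : ℕ, (1 - nome τ ^ (j + 1)) ^ 3) 0 ∧
    2 * πC * Complex.exp (πC * Complex.I * τ / 4) * ∏' j : ℕ, (1 - nome τ ^ (j + 1)) ^ 3 ≠ 0 := by
  obtain ⟨U, hUopen, hU0, hne, N, T, hTdiff, hkey⟩ := jacobiθ_key τ hτ
  set E := Complex.exp (πC * Complex.I * τ / 4) with hE
  have hUnhds : U ∈ 𝓝 (0:ℂ) := hUopen.mem_nhds hU0
  have hjac : ∀ v, jacobiθ τ v = 2 * E * Complex.sin (πC * v) * ∏' j : ℕ, fjac τ j v :=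
    fun v => rfl
  set B : ℂ → ℂ :=
    fun v => 2 * E * ((∏ j ∈ Finset.range N, fjac τ j v) * Complex.exp (T v)) with hB
  have hheaddiff : Differentiable ℂ (fun v => ∏ j ∈ Finset.range N, fjac τ j v) := by
    exact Differentiable.fun_finset_prod fun i _ => fjac_differentiable τ i
  have hBdiff : DifferentiableOn ℂ B U :=
    ((hheaddiff.differentiableOn).mul hTdiff.cexp).const_mul _
  have hBanal : AnalyticAt ℂ B 0 := hBdiff.analyticAt hUnhds
  have hG : AnalyticAt ℂ
      (fun v => (if v = 0 then πC else Complex.sin (πC * v) / v) * B v) 0 :=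
    sinc_analytic.mul hBanal
  have hP0 : (∏' j : ℕ, (1 - nome τ ^ (j+1))^3)
      = (∏ j ∈ Finset.range N, fjac τ j 0) * Complex.exp (T 0) := by
    rw [← hkey 0 hU0]
    exact tprod_congr fun j => (fjac_zero τ j).symm
  set F : ℂ → ℂ := fun v : ℂ => if v = 0 then
      2 * πC * E * ∏' j : ℕ, (1 - nome τ ^ (j + 1)) ^ 3
    else jacobiθ τ v / v with hF
  have hFG : (fun v => (if v = 0 then πC else Complex.sin (πC * v) / v) * B v) =ᶠ[𝓝 0] F := by
    filter_upwards [hUnhds] with v hv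
    by_cases h : v = 0
    · subst h
      simp only [hF, hB]
      rw [if_pos trivial, if_pos trivial, hP0]
      ring
    · simp only [hF, hB, if_neg h]
      rw [hjac v, hkey v hv]
      field_simp
  have hFanal : AnalyticAt ℂ F 0 := hG.congr hFG
  have hF0 : F 0 = 2 * πC * E * ∏' j : ℕ, (1 - nome τ ^ (j + 1)) ^ 3 := by
    simp [hF]
  have hjacF : (fun v => jacobiθ τ v) = fun v => v * F v := by
    funext v
    by_cases h : v = 0
    · subst h
      simp only [hjac 0, hF]
      simp
    · simp only [hF, if_neg h]
      rw [mul_comm, div_mul_cancel₀ _ h]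
  have hderiv : HasDerivAt (fun v => jacobiθ τ v)
      (2 * πC * E * ∏' j : ℕ, (1 - nome τ ^ (j + 1)) ^ 3) 0 := by
    rw [hjacF]
    have hd : HasDerivAt F (deriv F 0) 0 := hFanal.differentiableAt.hasDerivAt
    have hmul := (hasDerivAt_id (0:ℂ)).fun_mul hd
    simp only [id_eq, one_mul, zero_mul, add_zero, mul_zero] at hmul
    rw [hF0] at hmul
    convert hmul using 2
  have hnz : 2 * πC * E * (∏' j : ℕ, (1 - nome τ ^ (j + 1)) ^ 3) ≠ 0 := by
    rw [hP0]
    have hpi : πC ≠ 0 := Complex.ofReal_ne_zero.mpr Real.pi_ne_zero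
    exact mul_ne_zero
      (mul_ne_zero (mul_ne_zero two_ne_zero hpi) (Complex.exp_ne_zero _))
      (mul_ne_zero (Finset.prod_ne_zero_iff.mpr fun j _ => hne 0 hU0 j)
        (Complex.exp_ne_zero _))
  exact ⟨hFanal, hderiv, hnz⟩

end
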